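/- Let L be a Lindblad generator on n×n complex matrices whose restriction to the subspace of traceless matrices is injective, and let ρ̄ be a density matrix with L(ρ̄) = 0. If Y is a traceless matrix such that ker(ρ̄) ⊆ ker(Y), then the unique traceless matrix X with L(X) = Y satisfies ker(ρ̄) ⊆ ker(X). -/

import Mathlib

open scoped Matrix ComplexOrder

/-- The dissipator `D_X(ρ) = XρX† − (1/2)(X†Xρ + ρX†X)`. -/
noncomputable def dissipator {n : ℕ} (X ρ : Matrix (Fin n) (Fin n) ℂ) :
    Matrix (Fin n) (Fin n) ℂ :=
  X * ρ * Xᴴ - (1 / 2 : ℂ) • (Xᴴ * X * ρ + ρ * (Xᴴ * X))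

section aux

open Matrix

lemma aux_sum_mulVec {n : ℕ} {ι : Type*} (s : Finset ι)
    (A : ι → Matrix (Fin n) (Fin n) ℂ) (v : Fin n → ℂ) :
    (∑ μ ∈ s, A μ) *ᵥ v = ∑ μ ∈ s, (A μ) *ᵥ v := by
  classical
  induction s using Finset.induction with
  | empty => simp
  | insert _ _ h ih => simp [Finset.sum_insert h, Matrix.add_mulVec, ih]

lemma aux_mulVec_sum {n : ℕ} {ι : Type*} (s : Finset ι)
    (M : Matrix (Fin n) (Fin n) ℂ) (w : ι → (Fin n → ℂ)) :
    M *ᵥ (∑ μ ∈ s, w μ) = ∑ μ ∈ s, M *ᵥ w μ := by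
  classical
  induction s using Finset.induction with
  | empty => simp
  | insert _ _ h ih => simp [Finset.sum_insert h, Matrix.mulVec_add, ih]

lemma aux_dotProduct_sum {n : ℕ} {ι : Type*} (s : Finset ι)
    (u : Fin n → ℂ) (w : ι → (Fin n → ℂ)) :
    u ⬝ᵥ (∑ μ ∈ s, w μ) = ∑ μ ∈ s, u ⬝ᵥ w μ := by
  classical
  induction s using Finset.induction with
  | empty => simp
  | insert _ _ h ih => simp [Finset.sum_insert h, dotProduct_add, ih]

lemma dissipator_add {n : ℕ} (X a b : Matrix (Fin n) (Fin n) ℂ) :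
    dissipator X (a + b) = dissipator X a + dissipator X b := by
  simp only [dissipator, mul_add, add_mul, smul_add]
  abel

lemma dissipator_smul {n : ℕ} (X : Matrix (Fin n) (Fin n) ℂ) (c : ℂ)
    (a : Matrix (Fin n) (Fin n) ℂ) :
    dissipator X (c • a) = c • dissipator X a := by
  simp only [dissipator, mul_smul_comm, smul_mul_assoc, smul_add, smul_sub, smul_smul]
  rw [mul_comm c (1/2 : ℂ)]

lemma dissipator_trace {n : ℕ} (X ρ : Matrix (Fin n) (Fin n) ℂ) :
    (dissipator X ρ).trace = 0 := by
  simp only [dissipator, trace_sub, trace_smul, trace_add]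
  rw [trace_mul_cycle X ρ Xᴴ, trace_mul_comm ρ (Xᴴ * X)]
  simp only [smul_eq_mul]
  ring

end aux

open Matrix in
/-- let `L` be a Lindblad generator whose restriction to traceless matrices
is injective, and `ρ̄` a density matrix with `L(ρ̄) = 0`. If `Y` is traceless with
`ker ρ̄ ⊆ ker Y`, then the (unique) traceless `X` with `L(X) = Y` satisfies
`ker ρ̄ ⊆ ker X`. -/
theorem stmt4 {n m : ℕ}
    (L : Matrix (Fin n) (Fin n) ℂ → Matrix (Fin n) (Fin n) ℂ)
    (H : Matrix (Fin n) (Fin n) ℂ) (hH : H.IsHermitian)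
    (Lop : Fin m → Matrix (Fin n) (Fin n) ℂ)
    (hL : ∀ ρ, L ρ = (-Complex.I) • (H * ρ - ρ * H) + ∑ μ, dissipator (Lop μ) ρ)
    (hinj : ∀ X Y : Matrix (Fin n) (Fin n) ℂ,
      X.trace = 0 → Y.trace = 0 → L X = L Y → X = Y)
    (ρbar : Matrix (Fin n) (Fin n) ℂ) (hpsd : ρbar.PosSemidef) (htr : ρbar.trace = 1)
    (hstat : L ρbar = 0)
    (Y : Matrix (Fin n) (Fin n) ℂ) (hYtr : Y.trace = 0)
    (hYker : ∀ v : Fin n → ℂ, ρbar.mulVec v = 0 → Y.mulVec v = 0)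
    (X : Matrix (Fin n) (Fin n) ℂ) (hXtr : X.trace = 0) (hX : L X = Y) :
    ∀ v : Fin n → ℂ, ρbar.mulVec v = 0 → X.mulVec v = 0 := by
  classical
  have hherm : ρbarᴴ = ρbar := hpsd.1
  -- left kernel
  have hker_star : ∀ v : Fin n → ℂ, ρbar *ᵥ v = 0 → star v ᵥ* ρbar = 0 := by
    intro v hv
    have h := congrArg star hv
    rwa [Matrix.star_mulVec, hherm, star_zero] at h
  -- kernel is invariant under adjoints of jump operators
  have hLadj : ∀ v : Fin n → ℂ, ρbar *ᵥ v = 0 → ∀ μ,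
      ρbar *ᵥ ((Lop μ)ᴴ *ᵥ v) = 0 := by
    intro v hv
    have hq : star v ⬝ᵥ (L ρbar) *ᵥ v = 0 := by rw [hstat]; simp
    rw [hL] at hq
    have eH : star v ⬝ᵥ ((H * ρbar - ρbar * H) *ᵥ v) = 0 := by
      rw [Matrix.sub_mulVec, dotProduct_sub,
        show (H * ρbar) *ᵥ v = 0 by rw [← Matrix.mulVec_mulVec, hv, Matrix.mulVec_zero],
        Matrix.dotProduct_mulVec, ← Matrix.vecMul_vecMul, hker_star v hv,
        Matrix.zero_vecMul, zero_dotProduct]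
      simp
    have edis : ∀ μ, star v ⬝ᵥ (dissipator (Lop μ) ρbar) *ᵥ v =
        star ((Lop μ)ᴴ *ᵥ v) ⬝ᵥ ρbar *ᵥ ((Lop μ)ᴴ *ᵥ v) := by
      intro μ
      have h1 : (Lop μ * ρbar * (Lop μ)ᴴ) *ᵥ v = Lop μ *ᵥ (ρbar *ᵥ ((Lop μ)ᴴ *ᵥ v)) := by
        rw [Matrix.mulVec_mulVec, Matrix.mulVec_mulVec]
      have h2 : ((Lop μ)ᴴ * Lop μ * ρbar) *ᵥ v = 0 := by
        rw [← Matrix.mulVec_mulVec, hv, Matrix.mulVec_zero]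
      have h3 : star v ⬝ᵥ (ρbar * ((Lop μ)ᴴ * Lop μ)) *ᵥ v = 0 := by
        rw [Matrix.dotProduct_mulVec, ← Matrix.vecMul_vecMul, hker_star v hv,
          Matrix.zero_vecMul, zero_dotProduct]
      have h4 : star v ⬝ᵥ Lop μ *ᵥ (ρbar *ᵥ ((Lop μ)ᴴ *ᵥ v)) =
          star ((Lop μ)ᴴ *ᵥ v) ⬝ᵥ ρbar *ᵥ ((Lop μ)ᴴ *ᵥ v) := by
        rw [Matrix.dotProduct_mulVec,
          show star v ᵥ* Lop μ = star ((Lop μ)ᴴ *ᵥ v) by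
            rw [Matrix.star_mulVec, Matrix.conjTranspose_conjTranspose]]
      rw [dissipator, Matrix.sub_mulVec, dotProduct_sub, Matrix.smul_mulVec,
        dotProduct_smul, Matrix.add_mulVec, dotProduct_add, h1, h4, h2, h3]
      simp
    rw [Matrix.add_mulVec, dotProduct_add, Matrix.smul_mulVec, dotProduct_smul,
      eH, smul_zero, zero_add, aux_sum_mulVec, aux_dotProduct_sum] at hq
    have hq' : ∑ μ, star ((Lop μ)ᴴ *ᵥ v) ⬝ᵥ ρbar *ᵥ ((Lop μ)ᴴ *ᵥ v) = 0 := by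
      rw [← hq]; exact Finset.sum_congr rfl fun μ _ => (edis μ).symm
    intro μ
    have hnn : ∀ μ' ∈ Finset.univ (α := Fin m),
        (0:ℂ) ≤ star ((Lop μ')ᴴ *ᵥ v) ⬝ᵥ ρbar *ᵥ ((Lop μ')ᴴ *ᵥ v) :=
      fun μ' _ => hpsd.dotProduct_mulVec_nonneg _
    have h := (Finset.sum_eq_zero_iff_of_nonneg hnn).mp hq' μ (Finset.mem_univ μ)
    exact (hpsd.dotProduct_mulVec_zero_iff _).mp h
  -- kernel is invariant under K = iH - (1/2) Σ LᴴL
  set K : Matrix (Fin n) (Fin n) ℂ :=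
    Complex.I • H - (1/2 : ℂ) • ∑ μ, ((Lop μ)ᴴ * Lop μ) with hKdef
  have hKexp : ∀ (M : Matrix (Fin n) (Fin n) ℂ) (v : Fin n → ℂ),
      M *ᵥ (K *ᵥ v) = Complex.I • (M *ᵥ (H *ᵥ v)) -
        (1/2 : ℂ) • ∑ μ, M *ᵥ (((Lop μ)ᴴ * Lop μ) *ᵥ v) := by
    intro M v
    rw [hKdef, Matrix.sub_mulVec, Matrix.smul_mulVec, Matrix.smul_mulVec,
      aux_sum_mulVec, Matrix.mulVec_sub, Matrix.mulVec_smul, Matrix.mulVec_smul,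
      aux_mulVec_sum]
  have hKker : ∀ v : Fin n → ℂ, ρbar *ᵥ v = 0 → ρbar *ᵥ (K *ᵥ v) = 0 := by
    intro v hv
    have h0 : (L ρbar) *ᵥ v = 0 := by rw [hstat]; simp
    rw [hL, Matrix.add_mulVec, Matrix.smul_mulVec, Matrix.sub_mulVec,
      aux_sum_mulVec] at h0
    have e1 : (H * ρbar) *ᵥ v = 0 := by
      rw [← Matrix.mulVec_mulVec, hv, Matrix.mulVec_zero]
    have e2 : ∀ μ, (dissipator (Lop μ) ρbar) *ᵥ v
        = -((1/2 : ℂ) • (ρbar *ᵥ (((Lop μ)ᴴ * Lop μ) *ᵥ v))) := by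
      intro μ
      rw [dissipator, Matrix.sub_mulVec, Matrix.smul_mulVec, Matrix.add_mulVec,
        show (Lop μ * ρbar * (Lop μ)ᴴ) *ᵥ v = Lop μ *ᵥ (ρbar *ᵥ ((Lop μ)ᴴ *ᵥ v)) by
          rw [Matrix.mulVec_mulVec, Matrix.mulVec_mulVec],
        hLadj v hv μ, Matrix.mulVec_zero,
        show ((Lop μ)ᴴ * Lop μ * ρbar) *ᵥ v = 0 by
          rw [← Matrix.mulVec_mulVec, hv, Matrix.mulVec_zero],
        show (ρbar * ((Lop μ)ᴴ * Lop μ)) *ᵥ v = ρbar *ᵥ (((Lop μ)ᴴ * Lop μ) *ᵥ v) by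
          rw [Matrix.mulVec_mulVec]]
      simp [smul_add]
    rw [e1, zero_sub, Finset.sum_congr rfl fun μ _ => e2 μ,
      ← Matrix.mulVec_mulVec v ρbar H] at h0
    rw [hKexp, ← h0]
    simp only [smul_neg, neg_smul, neg_neg, Finset.sum_neg_distrib, ← Finset.smul_sum,
      sub_eq_add_neg]
  -- the kernel-preserving subspace is invariant under L
  have hInv : ∀ M : Matrix (Fin n) (Fin n) ℂ,
      (∀ v : Fin n → ℂ, ρbar *ᵥ v = 0 → M *ᵥ v = 0) →
      ∀ v : Fin n → ℂ, ρbar *ᵥ v = 0 → (L M) *ᵥ v = 0 := by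
    intro M hM v hv
    have key : (L M) *ᵥ v = M *ᵥ (K *ᵥ v) := by
      rw [hL, Matrix.add_mulVec, Matrix.smul_mulVec, Matrix.sub_mulVec,
        aux_sum_mulVec]
      have e1 : (H * M) *ᵥ v = 0 := by
        rw [← Matrix.mulVec_mulVec, hM v hv, Matrix.mulVec_zero]
      have e2 : ∀ μ, (dissipator (Lop μ) M) *ᵥ v
          = -((1/2 : ℂ) • (M *ᵥ (((Lop μ)ᴴ * Lop μ) *ᵥ v))) := by
        intro μ
        rw [dissipator, Matrix.sub_mulVec, Matrix.smul_mulVec, Matrix.add_mulVec,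
          show (Lop μ * M * (Lop μ)ᴴ) *ᵥ v = Lop μ *ᵥ (M *ᵥ ((Lop μ)ᴴ *ᵥ v)) by
            rw [Matrix.mulVec_mulVec, Matrix.mulVec_mulVec],
          hM _ (hLadj v hv μ), Matrix.mulVec_zero,
          show ((Lop μ)ᴴ * Lop μ * M) *ᵥ v = 0 by
            rw [← Matrix.mulVec_mulVec, hM v hv, Matrix.mulVec_zero],
          show (M * ((Lop μ)ᴴ * Lop μ)) *ᵥ v = M *ᵥ (((Lop μ)ᴴ * Lop μ) *ᵥ v) by
            rw [Matrix.mulVec_mulVec]]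
        simp [smul_add]
      rw [e1, zero_sub, Finset.sum_congr rfl fun μ _ => e2 μ,
        ← Matrix.mulVec_mulVec v M H, hKexp]
      simp only [smul_neg, neg_smul, neg_neg, Finset.sum_neg_distrib, ← Finset.smul_sum,
        sub_eq_add_neg]
    rw [key, hM _ (hKker v hv)]
  -- L maps everything to traceless matrices
  have htrL : ∀ M : Matrix (Fin n) (Fin n) ℂ, (L M).trace = 0 := by
    intro M
    rw [hL, Matrix.trace_add, Matrix.trace_smul, Matrix.trace_sub,
      Matrix.trace_mul_comm, sub_self, smul_zero, zero_add, Matrix.trace_sum]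
    exact Finset.sum_eq_zero fun μ _ => dissipator_trace _ _
  -- L is linear
  have hlin : IsLinearMap ℂ L := by
    constructor
    · intro a b
      rw [hL, hL, hL]
      have hcomm : H * (a + b) - (a + b) * H = (H * a - a * H) + (H * b - b * H) := by
        noncomm_ring
      rw [hcomm, smul_add, Finset.sum_congr rfl fun μ _ => dissipator_add (Lop μ) a b,
        Finset.sum_add_distrib]
      abel
    · intro c a
      rw [hL, hL]
      simp only [dissipator_smul, ← Finset.smul_sum, mul_smul_comm, smul_mul_assoc,
        ← smul_sub, smul_add, smul_smul, mul_comm c (-Complex.I)]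
  set Llin : Matrix (Fin n) (Fin n) ℂ →ₗ[ℂ] Matrix (Fin n) (Fin n) ℂ :=
    IsLinearMap.mk' L hlin with hLlin
  -- the subspace
  set S : Submodule ℂ (Matrix (Fin n) (Fin n) ℂ) :=
    { carrier := {M | M.trace = 0 ∧ ∀ v : Fin n → ℂ, ρbar *ᵥ v = 0 → M *ᵥ v = 0}
      add_mem' := fun ha hb => ⟨by rw [Matrix.trace_add, ha.1, hb.1, add_zero],
        fun v hv => by rw [Matrix.add_mulVec, ha.2 v hv, hb.2 v hv, add_zero]⟩
      zero_mem' := ⟨by simp, fun v _ => Matrix.zero_mulVec v⟩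
      smul_mem' := fun c x hx => ⟨by rw [Matrix.trace_smul, hx.1, smul_zero],
        fun v hv => by rw [Matrix.smul_mulVec, hx.2 v hv, smul_zero]⟩ } with hS
  have hmaps : ∀ x ∈ S, Llin x ∈ S := fun x hx => ⟨htrL x, hInv x hx.2⟩
  set f : S →ₗ[ℂ] S := Llin.restrict hmaps with hf
  have hfinj : Function.Injective f := by
    intro a b hab
    have h : L a.1 = L b.1 := congrArg Subtype.val hab
    exact Subtype.ext (hinj a.1 b.1 a.2.1 b.2.1 h)
  have hfsurj : Function.Surjective f :=
    (LinearMap.injective_iff_surjective).mp hfinj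
  obtain ⟨X', hX'⟩ := hfsurj ⟨Y, hYtr, hYker⟩
  have hLX' : L X'.1 = Y := congrArg Subtype.val hX'
  have hXX' : X = X'.1 := hinj X X'.1 hXtr X'.2.1 (by rw [hX, hLX'])
  rw [hXX']
  exact fun v hv => X'.2.2 v hv
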